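/- A bounded sequence σ : ℕ → ℂ is uniformly continuous with respect to the sqrt-distance ρ(j,k) = |√j - √k| if and only if its right shift τ_R σ, defined by (τ_R σ)(0) = 0 and (τ_R σ)(j) = σ(j-1) for j ≥ 1, is uniformly continuous with respect to ρ. -/

import Mathlib

lemma key1 (x y : ℝ) (hy : 0 ≤ y) (hxy : y ≤ x) :
    Real.sqrt (x+1) - Real.sqrt (y+1) ≤ Real.sqrt x - Real.sqrt y := by
  have hx : 0 ≤ x := hy.trans hxy
  have ha := Real.sq_sqrt hx
  have hb := Real.sq_sqrt hy
  have hc := Real.sq_sqrt (by linarith : (0:ℝ) ≤ x+1)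
  have hd := Real.sq_sqrt (by linarith : (0:ℝ) ≤ y+1)
  have h1 : Real.sqrt y ≤ Real.sqrt x := Real.sqrt_le_sqrt hxy
  have h2 : Real.sqrt (y+1) ≤ Real.sqrt (x+1) := Real.sqrt_le_sqrt (by linarith)
  have h3 : Real.sqrt x ≤ Real.sqrt (x+1) := Real.sqrt_le_sqrt (by linarith)
  have h4 : Real.sqrt y ≤ Real.sqrt (y+1) := Real.sqrt_le_sqrt (by linarith)
  have h5 : (1:ℝ) ≤ Real.sqrt (y+1) := by
    nlinarith [Real.sqrt_nonneg (y+1)]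
  nlinarith [Real.sqrt_nonneg x, Real.sqrt_nonneg y, mul_nonneg (sub_nonneg.2 h3) (sub_nonneg.2 h4)]

lemma key2 (x y : ℝ) (hy : 1 ≤ y) (hxy : y ≤ x) :
    Real.sqrt x - Real.sqrt y ≤ 2*(Real.sqrt (x+1) - Real.sqrt (y+1)) := by
  have hy0 : (0:ℝ) ≤ y := by linarith
  have hx : 0 ≤ x := hy0.trans hxy
  have ha := Real.sq_sqrt hx
  have hb := Real.sq_sqrt hy0
  have hc := Real.sq_sqrt (by linarith : (0:ℝ) ≤ x+1)
  have hd := Real.sq_sqrt (by linarith : (0:ℝ) ≤ y+1)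
  have h1 : Real.sqrt y ≤ Real.sqrt x := Real.sqrt_le_sqrt hxy
  have h2 : Real.sqrt (y+1) ≤ Real.sqrt (x+1) := Real.sqrt_le_sqrt (by linarith)
  have h3 : Real.sqrt x ≤ Real.sqrt (x+1) := Real.sqrt_le_sqrt (by linarith)
  have h4 : Real.sqrt y ≤ Real.sqrt (y+1) := Real.sqrt_le_sqrt (by linarith)
  have h5 : (1:ℝ) ≤ Real.sqrt y := by
    nlinarith [Real.sqrt_nonneg y]
  have h6 : Real.sqrt (x+1) ≤ 2 * Real.sqrt x := by
    nlinarith [Real.sqrt_nonneg x]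
  have h7 : Real.sqrt (y+1) ≤ 2 * Real.sqrt y := by
    nlinarith [Real.sqrt_nonneg y]
  nlinarith [Real.sqrt_nonneg x, Real.sqrt_nonneg y, mul_nonneg (sub_nonneg.2 h1) (sub_nonneg.2 h2),
    mul_nonneg (sub_nonneg.2 h3) (sub_nonneg.2 h4), sq_nonneg (Real.sqrt x - Real.sqrt y),
    sq_nonneg (Real.sqrt (x+1) - Real.sqrt (y+1))]

lemma keyA (x y : ℝ) (hx : 0 ≤ x) (hy : 0 ≤ y) :
    |Real.sqrt (x+1) - Real.sqrt (y+1)| ≤ |Real.sqrt x - Real.sqrt y| := by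
  rcases le_total y x with h | h
  · rw [abs_of_nonneg (sub_nonneg.2 (Real.sqrt_le_sqrt (by linarith : y+1 ≤ x+1))),
      abs_of_nonneg (sub_nonneg.2 (Real.sqrt_le_sqrt h))]
    exact key1 x y hy h
  · rw [abs_sub_comm, abs_sub_comm (Real.sqrt x),
      abs_of_nonneg (sub_nonneg.2 (Real.sqrt_le_sqrt (by linarith : x+1 ≤ y+1))),
      abs_of_nonneg (sub_nonneg.2 (Real.sqrt_le_sqrt h))]
    exact key1 y x hx h

lemma keyB (x y : ℝ) (hx : 1 ≤ x) (hy : 1 ≤ y) :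
    |Real.sqrt x - Real.sqrt y| ≤ 2 * |Real.sqrt (x+1) - Real.sqrt (y+1)| := by
  rcases le_total y x with h | h
  · rw [abs_of_nonneg (sub_nonneg.2 (Real.sqrt_le_sqrt h)),
      abs_of_nonneg (sub_nonneg.2 (Real.sqrt_le_sqrt (by linarith : y+1 ≤ x+1)))]
    exact key2 x y hy h
  · rw [abs_sub_comm, abs_sub_comm (Real.sqrt (x+1)),
      abs_of_nonneg (sub_nonneg.2 (Real.sqrt_le_sqrt h)),
      abs_of_nonneg (sub_nonneg.2 (Real.sqrt_le_sqrt (by linarith : x+1 ≤ y+1)))]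
    exact key2 y x hx h

lemma sqrt2_le_cast (n : ℕ) : (1.41:ℝ) ≤ Real.sqrt ((n:ℝ)+1+1) := by
  have h := Real.sq_sqrt (by positivity : (0:ℝ) ≤ (n:ℝ)+1+1)
  nlinarith [Real.sqrt_nonneg ((n:ℝ)+1+1), Nat.cast_nonneg (α := ℝ) n]

theorem unif_cont_iff_right_shift (σ : ℕ → ℂ)
    (hbdd : ∃ M : ℝ, ∀ n, ‖σ n‖ ≤ M) :
    (∀ ε > 0, ∃ δ > 0, ∀ j k : ℕ,
      |Real.sqrt j - Real.sqrt k| ≤ δ → ‖σ j - σ k‖ < ε) ↔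
    (∀ ε > 0, ∃ δ > 0, ∀ j k : ℕ,
      |Real.sqrt j - Real.sqrt k| ≤ δ →
        ‖(if j = 0 then 0 else σ (j - 1)) -
          (if k = 0 then 0 else σ (k - 1))‖ < ε) := by
  constructor
  · intro h ε hε
    obtain ⟨δ, hδ, H⟩ := h ε hε
    refine ⟨min (δ/2) (1/3), by positivity, ?_⟩
    intro j k hjk
    have hm2 : min (δ/2) (1/3) ≤ δ/2 := min_le_left _ _
    rcases j with _ | _ | j <;> rcases k with _ | _ | k
    · simpa using hε
    · exfalso; push_cast at hjk; norm_num at hjk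
    · exfalso
      have h2 := sqrt2_le_cast k
      push_cast at hjk; norm_num at hjk
      have h3 := abs_le.mp hjk.2
      linarith [h3.1]
    · exfalso; push_cast at hjk; norm_num at hjk
    · simpa using hε
    · exfalso
      have h2 := sqrt2_le_cast k
      push_cast at hjk; norm_num at hjk
      have h3 := abs_le.mp hjk.2
      linarith [h3.1]
    · exfalso
      have h2 := sqrt2_le_cast j
      push_cast at hjk; norm_num at hjk
      have h3 := abs_le.mp hjk.2
      linarith [h3.2]
    · exfalso
      have h2 := sqrt2_le_cast j
      push_cast at hjk; norm_num at hjk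
      have h3 := abs_le.mp hjk.2
      linarith [h3.2]
    · have key : |Real.sqrt ((j:ℝ)+1) - Real.sqrt ((k:ℝ)+1)| ≤ δ := by
        have hB := keyB ((j:ℝ)+1) ((k:ℝ)+1)
          (by have := Nat.cast_nonneg (α := ℝ) j; linarith)
          (by have := Nat.cast_nonneg (α := ℝ) k; linarith)
        have hjk' : |Real.sqrt ((j:ℝ)+1+1) - Real.sqrt ((k:ℝ)+1+1)| ≤ δ/2 := by
          refine le_trans (le_of_eq ?_) (hjk.trans hm2)
          push_cast; ring_nf
        linarith
      have := H (j+1) (k+1) (by push_cast; exact key)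
      simpa using this
  · intro h ε hε
    obtain ⟨δ, hδ, H⟩ := h ε hε
    refine ⟨δ, hδ, ?_⟩
    intro j k hjk
    have key : |Real.sqrt ((j:ℝ)+1) - Real.sqrt ((k:ℝ)+1)| ≤ δ :=
      le_trans (keyA _ _ (Nat.cast_nonneg j) (Nat.cast_nonneg k)) hjk
    have := H (j+1) (k+1) (by push_cast; exact key)
    simpa using this
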